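/- Let n > 0 and let x, y, z : ℝ → ℝ be twice differentiable functions satisfying the Clohessy–Wiltshire equations ẍ(t) = 3n²x(t) + 2nẏ(t), ÿ(t) = −2nẋ(t), and z̈(t) = −n²z(t) for all t ∈ ℝ. Then for all t ∈ ℝ, the state vector (x(t), y(t), z(t), ẋ(t), ẏ(t), ż(t)) ∈ ℝ⁶ equals Φ(t) applied to the initial state vector (x(0), y(0), z(0), ẋ(0), ẏ(0), ż(0)), where Φ(t) is the Clohessy–Wiltshire state-transition matrix. -/

import Mathlib

open Real Matrix

lemma const_of_deriv_zero (h : ℝ → ℝ) (hh : ∀ t, HasDerivAt h 0 t) :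
    ∀ t, h t = h 0 := by
  intro t
  exact is_const_of_deriv_eq_zero (fun s => (hh s).differentiableAt)
    (fun s => (hh s).deriv) t 0

lemma cw_harmonic (n : ℝ) (hn : n ≠ 0) (u u' : ℝ → ℝ)
    (hu : ∀ t, HasDerivAt u (u' t) t)
    (hu' : ∀ t, HasDerivAt u' (-(n ^ 2) * u t) t) :
    ∀ t, u t = u 0 * Real.cos (n * t) + (u' 0 / n) * Real.sin (n * t) ∧
         u' t = -(n * u 0) * Real.sin (n * t) + u' 0 * Real.cos (n * t) := by
  intro t
  have hc : ∀ s, HasDerivAt (fun s => u s * Real.cos (n * s) - (u' s / n) * Real.sin (n * s)) 0 s := by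
    intro s
    have hcos : HasDerivAt (fun s => Real.cos (n * s)) (-Real.sin (n * s) * (n * 1)) s :=
      ((hasDerivAt_id s).const_mul n).cos
    have hsin : HasDerivAt (fun s => Real.sin (n * s)) (Real.cos (n * s) * (n * 1)) s :=
      ((hasDerivAt_id s).const_mul n).sin
    have h1 := ((hu s).mul hcos).sub (((hu' s).div_const n).mul hsin)
    refine h1.congr_deriv ?_
    field_simp
    ring
  have hs : ∀ s, HasDerivAt (fun s => u s * Real.sin (n * s) + (u' s / n) * Real.cos (n * s)) 0 s := by
    intro s
    have hcos : HasDerivAt (fun s => Real.cos (n * s)) (-Real.sin (n * s) * (n * 1)) s :=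
      ((hasDerivAt_id s).const_mul n).cos
    have hsin : HasDerivAt (fun s => Real.sin (n * s)) (Real.cos (n * s) * (n * 1)) s :=
      ((hasDerivAt_id s).const_mul n).sin
    have h1 := ((hu s).mul hsin).add (((hu' s).div_const n).mul hcos)
    refine h1.congr_deriv ?_
    field_simp
    ring
  have hC := const_of_deriv_zero _ hc t
  have hS := const_of_deriv_zero _ hs t
  simp only [mul_zero, Real.cos_zero, Real.sin_zero, mul_one] at hC hS
  have hid := Real.sin_sq_add_cos_sq (n * t)
  constructor
  · linear_combination Real.cos (n*t) * hC + Real.sin (n*t) * hS - u t * hid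
  · have h1 : u' t / n = u' 0 / n * Real.cos (n*t) - u 0 * Real.sin (n*t) := by
      linear_combination Real.cos (n*t) * hS - Real.sin (n*t) * hC - (u' t / n) * hid
    field_simp at h1
    linarith [h1]

theorem cw_formulas (n : ℝ) (hn : 0 < n)
    (x y z x' y' z' x'' y'' z'' : ℝ → ℝ)
    (hx : ∀ t, HasDerivAt x (x' t) t) (hy : ∀ t, HasDerivAt y (y' t) t)
    (hz : ∀ t, HasDerivAt z (z' t) t)
    (hx' : ∀ t, HasDerivAt x' (x'' t) t) (hy' : ∀ t, HasDerivAt y' (y'' t) t)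
    (hz' : ∀ t, HasDerivAt z' (z'' t) t)
    (hxeq : ∀ t, x'' t = 3 * n ^ 2 * x t + 2 * n * y' t)
    (hyeq : ∀ t, y'' t = -2 * n * x' t)
    (hzeq : ∀ t, z'' t = -n ^ 2 * z t) :
    (∀ t, x t = (4 - 3*Real.cos (n*t)) * x 0 + (Real.sin (n*t)/n) * x' 0 + (2*(1-Real.cos (n*t))/n) * y' 0) ∧
    (∀ t, x' t = 3*n*Real.sin (n*t) * x 0 + Real.cos (n*t) * x' 0 + 2*Real.sin (n*t) * y' 0) ∧
    (∀ t, y' t = -6*n*(1-Real.cos (n*t)) * x 0 - 2*Real.sin (n*t) * x' 0 + (4*Real.cos (n*t)-3) * y' 0) ∧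
    (∀ t, z t = Real.cos (n*t) * z 0 + (Real.sin (n*t)/n) * z' 0) ∧
    (∀ t, z' t = -n*Real.sin (n*t) * z 0 + Real.cos (n*t) * z' 0) ∧
    (∀ t, y t = 6*(Real.sin (n*t) - n*t) * x 0 + y 0 - (2*(1-Real.cos (n*t))/n) * x' 0 + ((4*Real.sin (n*t) - 3*(n*t))/n) * y' 0) := by
  have hn' : n ≠ 0 := ne_of_gt hn
  -- conserved quantity
  have hc1 : ∀ t, y' t + 2 * n * x t = y' 0 + 2 * n * x 0 := by
    apply const_of_deriv_zero (fun t => y' t + 2*n*x t)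
    intro t
    have h := (hy' t).add ((hx t).const_mul (2*n))
    refine h.congr_deriv ?_
    rw [hyeq t]; ring
  set c1 : ℝ := y' 0 + 2*n*x 0 with hc1def
  -- x part: u = x - 2 c1 / n is harmonic
  have hu : ∀ t, HasDerivAt (fun t => x t - 2*c1/n) (x' t) t := fun t =>
    (hx t).sub_const (2*c1/n)
  have hu' : ∀ t, HasDerivAt x' (-(n^2) * (x t - 2*c1/n)) t := by
    intro t
    have heq : x'' t = -(n^2) * (x t - 2*c1/n) := by
      rw [hxeq t]
      have hy't : y' t = c1 - 2*n*x t := by linarith [hc1 t]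
      rw [hy't]; field_simp; ring
    have h := hx' t
    rwa [heq] at h
  have hxu := cw_harmonic n hn' _ x' hu hu'
  have hXf : ∀ t, x t = (4 - 3*Real.cos (n*t)) * x 0 + (Real.sin (n*t)/n) * x' 0 + (2*(1-Real.cos (n*t))/n) * y' 0 := by
    intro t
    have h := (hxu t).1
    field_simp at h ⊢
    linear_combination h
  have hX'f : ∀ t, x' t = 3*n*Real.sin (n*t) * x 0 + Real.cos (n*t) * x' 0 + 2*Real.sin (n*t) * y' 0 := by
    intro t
    have h := (hxu t).2
    field_simp at h ⊢
    linear_combination h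
  have hY'f : ∀ t, y' t = -6*n*(1-Real.cos (n*t)) * x 0 - 2*Real.sin (n*t) * x' 0 + (4*Real.cos (n*t)-3) * y' 0 := by
    intro t
    have h1 : y' t = c1 - 2*n*x t := by linarith [hc1 t]
    rw [h1, hXf t]
    field_simp; ring
  -- z part
  have hzu' : ∀ t, HasDerivAt z' (-(n^2) * z t) t := by
    intro t
    have h := hz' t
    rw [hzeq t] at h
    convert h using 1
  have hzu := cw_harmonic n hn' z z' hz hzu'
  have hZf : ∀ t, z t = Real.cos (n*t) * z 0 + (Real.sin (n*t)/n) * z' 0 := by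
    intro t
    have h := (hzu t).1
    linear_combination h
  have hZ'f : ∀ t, z' t = -n*Real.sin (n*t) * z 0 + Real.cos (n*t) * z' 0 := by
    intro t
    have h := (hzu t).2
    linear_combination h
  -- y part: integrate
  have hYf : ∀ t, y t = 6*(Real.sin (n*t) - n*t) * x 0 + y 0 - (2*(1-Real.cos (n*t))/n) * x' 0 + ((4*Real.sin (n*t) - 3*(n*t))/n) * y' 0 := by
    have key : ∀ t, y t - (6*(Real.sin (n*t) - n*t) * x 0 + y 0 - (2*(1-Real.cos (n*t))/n) * x' 0 + ((4*Real.sin (n*t) - 3*(n*t))/n) * y' 0)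
        = y 0 - (6*(Real.sin (n*0) - n*0) * x 0 + y 0 - (2*(1-Real.cos (n*0))/n) * x' 0 + ((4*Real.sin (n*0) - 3*(n*0))/n) * y' 0) := by
      apply const_of_deriv_zero
      intro t
      have hcos : HasDerivAt (fun s => Real.cos (n * s)) (-Real.sin (n * t) * (n * 1)) t :=
        ((hasDerivAt_id t).const_mul n).cos
      have hsin : HasDerivAt (fun s => Real.sin (n * s)) (Real.cos (n * t) * (n * 1)) t :=
        ((hasDerivAt_id t).const_mul n).sin
      have hnt : HasDerivAt (fun s : ℝ => n * s) (n * 1) t := (hasDerivAt_id t).const_mul n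
      have hYder : HasDerivAt (fun s => 6*(Real.sin (n*s) - n*s) * x 0 + y 0 - (2*(1-Real.cos (n*s))/n) * x' 0 + ((4*Real.sin (n*s) - 3*(n*s))/n) * y' 0)
          ((6*(Real.cos (n*t)*(n*1) - n*1)) * x 0 - (2*(0 - (-Real.sin (n*t)*(n*1)))/n) * x' 0 + ((4*(Real.cos (n*t)*(n*1)) - 3*(n*1))/n) * y' 0) t := by
        exact ((((((hsin.sub hnt).const_mul 6).mul_const (x 0)).add_const (y 0)).sub
          (((((hasDerivAt_const t (1:ℝ)).sub hcos).const_mul 2).div_const n).mul_const (x' 0)))).add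
          ((((hsin.const_mul 4).sub (hnt.const_mul 3)).div_const n).mul_const (y' 0))
      have h := (hy t).sub hYder
      refine h.congr_deriv ?_
      rw [hY'f t]
      field_simp; ring
    intro t
    have h := key t
    simp only [mul_zero, Real.sin_zero, Real.cos_zero] at h
    have : y t = y 0 + (6*(Real.sin (n*t) - n*t) * x 0 + y 0 - (2*(1-Real.cos (n*t))/n) * x' 0 + ((4*Real.sin (n*t) - 3*(n*t))/n) * y' 0) - (6*(0 - 0) * x 0 + y 0 - (2*(1-1)/n) * x' 0 + ((4*0 - 3*0)/n) * y' 0) := by linarith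
    rw [this]; field_simp; ring
  exact ⟨hXf, hX'f, hY'f, hZf, hZ'f, hYf⟩



/-- Position-position block of the Clohessy–Wiltshire state-transition matrix. -/
noncomputable def phiRR (n t : ℝ) : Matrix (Fin 3) (Fin 3) ℝ :=
  !![4 - 3 * Real.cos (n * t), 0, 0;
     6 * (Real.sin (n * t) - n * t), 1, 0;
     0, 0, Real.cos (n * t)]

/-- Position-velocity block of the Clohessy–Wiltshire state-transition matrix. -/
noncomputable def phiRV (n t : ℝ) : Matrix (Fin 3) (Fin 3) ℝ :=
  (1 / n) • !![Real.sin (n * t), 2 * (1 - Real.cos (n * t)), 0;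
               -2 * (1 - Real.cos (n * t)), 4 * Real.sin (n * t) - 3 * (n * t), 0;
               0, 0, Real.sin (n * t)]

/-- Velocity-position block of the Clohessy–Wiltshire state-transition matrix. -/
noncomputable def phiVR (n t : ℝ) : Matrix (Fin 3) (Fin 3) ℝ :=
  n • !![3 * Real.sin (n * t), 0, 0;
         -6 * (1 - Real.cos (n * t)), 0, 0;
         0, 0, -Real.sin (n * t)]

/-- Velocity-velocity block of the Clohessy–Wiltshire state-transition matrix. -/
noncomputable def phiVV (n t : ℝ) : Matrix (Fin 3) (Fin 3) ℝ :=
  !![Real.cos (n * t), 2 * Real.sin (n * t), 0;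
     -2 * Real.sin (n * t), 4 * Real.cos (n * t) - 3, 0;
     0, 0, Real.cos (n * t)]

/-- The full 6×6 Clohessy–Wiltshire state-transition matrix. -/
noncomputable def cwPhi (n t : ℝ) : Matrix (Fin 3 ⊕ Fin 3) (Fin 3 ⊕ Fin 3) ℝ :=
  Matrix.fromBlocks (phiRR n t) (phiRV n t) (phiVR n t) (phiVV n t)

theorem cw_state_transition (n : ℝ) (hn : 0 < n)
    (x y z x' y' z' x'' y'' z'' : ℝ → ℝ)
    (hx : ∀ t, HasDerivAt x (x' t) t) (hy : ∀ t, HasDerivAt y (y' t) t)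
    (hz : ∀ t, HasDerivAt z (z' t) t)
    (hx' : ∀ t, HasDerivAt x' (x'' t) t) (hy' : ∀ t, HasDerivAt y' (y'' t) t)
    (hz' : ∀ t, HasDerivAt z' (z'' t) t)
    (hxeq : ∀ t, x'' t = 3 * n ^ 2 * x t + 2 * n * y' t)
    (hyeq : ∀ t, y'' t = -2 * n * x' t)
    (hzeq : ∀ t, z'' t = -n ^ 2 * z t) :
    ∀ t : ℝ,
      (Sum.elim ![x t, y t, z t] ![x' t, y' t, z' t] : Fin 3 ⊕ Fin 3 → ℝ) =
        cwPhi n t *ᵥ Sum.elim ![x 0, y 0, z 0] ![x' 0, y' 0, z' 0] := by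
  obtain ⟨hXf, hX'f, hY'f, hZf, hZ'f, hYf⟩ :=
    cw_formulas n hn x y z x' y' z' x'' y'' z'' hx hy hz hx' hy' hz' hxeq hyeq hzeq
  intro t
  funext i
  rcases i with i | i <;> fin_cases i <;>
    simp [cwPhi, Matrix.fromBlocks_mulVec, phiRR, phiRV, phiVR, phiVV, Matrix.mulVec,
      dotProduct, Fin.sum_univ_succ, Matrix.smul_apply, smul_eq_mul]
  · rw [hXf t]; ring
  · rw [hYf t]; ring
  · rw [hZf t]; ring
  · rw [hX'f t]; ring
  · rw [hY'f t]; ring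
  · rw [hZ'f t]; ring
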